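/- Let (A,d) be a bounded metric space with a dyadic decomposition 𝒟 (constants A₀, B₀, C₀, n₀). For every A' > 10 and every nonempty open set U ⊊ A there exist a constant B' ≥ 1, depending only on A' and the decomposition constants, and a subcollection 𝒲 ⊆ 𝒟 such that: (a) U = ⋃_{Q ∈ 𝒲} Q; (b) every Q ∈ 𝒲 satisfies diam(Q) ≤ (1/(A'−1))·dist(Q, A∖U) and dist(Q, A∖U) ≤ B'·diam(Q); (c) every Q ∈ 𝒲 contains a point that belongs to no other member of 𝒲. -/

import Mathlib

open Metric MeasureTheory Set ENNReal

noncomputable section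

/-- The `t`-Hausdorff content of a set `E` in a metric space:
the infimum of `∑ diam(E_i)^t` over countable covers of `E`. -/
noncomputable def hContent {A : Type*} [MetricSpace A] (t : ℝ) (E : Set A) : ℝ≥0∞ :=
  ⨅ (c : ℕ → Set A) (_ : E ⊆ ⋃ n, c n), ∑' n, EMetric.diam (c n) ^ t

/-- The modified Hausdorff content `Ĥ^t_∞(E) = sup_{s > t} H^s_∞(E)`. -/
noncomputable def hContentHat {A : Type*} [MetricSpace A] (t : ℝ) (E : Set A) : ℝ≥0∞ :=
  ⨆ (s : ℝ) (_ : t < s), hContent s E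

/-- A measure `μ` is `D`-Ahlfors regular with constant `cA ≥ 1` if
`cA⁻¹ r^D ≤ μ(B(x,r)) ≤ cA r^D` for all `x` and `0 < r < diam A`. -/
def IsAhlfors {A : Type*} [MetricSpace A] [MeasurableSpace A]
    (μ : Measure A) (D cA : ℝ) : Prop :=
  1 ≤ cA ∧ ∀ (x : A) (r : ℝ), 0 < r → r < Metric.diam (Set.univ : Set A) →
    ENNReal.ofReal (cA⁻¹ * r ^ D) ≤ μ (closedBall x r) ∧
      μ (closedBall x r) ≤ ENNReal.ofReal (cA * r ^ D)

/-- A dyadic decomposition of a metric space `A`: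
a countable collection `𝒟 = ⋃ n, W n` of subsets of `A` with constants
`A₀, B₀, C₀ ≥ 1` and `n₀ ∈ ℕ` with the standard properties. -/
structure DyadicDecomp (A : Type*) [MetricSpace A] where
  W : ℕ → Set (Set A)
  A0 : ℝ
  B0 : ℝ
  C0 : ℝ
  n0 : ℕ
  one_le_A0 : 1 ≤ A0
  one_le_B0 : 1 ≤ B0
  one_le_C0 : 1 ≤ C0
  finite : ∀ n, (W n).Finite
  covers : ∀ n, ⋃₀ W n = Set.univ
  diam_to_zero : ∀ ε : ℝ, 0 < ε → ∃ N : ℕ, ∀ n ≥ N, ∀ Q ∈ W n, Metric.diam Q ≤ ε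
  ball_in : ∀ n, ∀ Q ∈ W n, ∃ x ∈ Q,
    Metric.ball x (Metric.diam Q / A0) ⊆ Q ∧ Q ⊆ Metric.ball x (A0 * Metric.diam Q)
  nested : ∀ n ≥ n0, ∀ Q ∈ W n, ∃ Q' ∈ W (n - n0), Q ⊆ Q'
  overlap : ∀ (n l : ℕ), ∀ Q ∈ W n,
    (({Q' | Q' ∈ W (n + l) ∧ (Q' ∩ Q).Nonempty}).ncard : ℝ) ≤ B0 ^ l
  comparable : ∀ n, ∀ Q ∈ W n, ∀ Q' ∈ W (n + 1),
    C0⁻¹ * Metric.diam Q' ≤ Metric.diam Q ∧ Metric.diam Q ≤ C0 * Metric.diam Q'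

/-- Membership in a dyadic decomposition. -/
def DyadicDecomp.mem {A : Type*} [MetricSpace A] (𝒟 : DyadicDecomp A) (Q : Set A) : Prop :=
  ∃ n, Q ∈ 𝒟.W n

/-- The parent property: every set of positive diameter is contained in a member of the
decomposition of comparable diameter. -/
def DyadicDecomp.ParentProp {A : Type*} [MetricSpace A] (𝒟 : DyadicDecomp A) (c0 : ℝ) : Prop :=
  1 ≤ c0 ∧ ∀ E : Set A, 0 < Metric.diam E →
    ∃ Q, 𝒟.mem Q ∧ E ⊆ Q ∧ Metric.diam Q ≤ c0 * Metric.diam E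

/-- The class `𝒢_s` of `G_δ` sets with uniformly positive `s`-content density
on members of the dyadic decomposition. -/
def Gclass {A : Type*} [MetricSpace A] (𝒟 : DyadicDecomp A) (s : ℝ) : Set (Set A) :=
  {E | IsGδ E ∧ ∃ c : ℝ, 0 < c ∧ ∀ Q, 𝒟.mem Q →
    ENNReal.ofReal (c * Metric.diam Q ^ s) ≤ hContent s (E ∩ Q)}

/-- Distance between two subsets of a metric space. -/
noncomputable def setDist {A : Type*} [MetricSpace A] (S T : Set A) : ℝ :=
  (⨅ x ∈ S, EMetric.infEdist x T).toReal

/-- A set `F` is `t`-metrically dense if `Ĥ^t_∞(F ∩ U) = Ĥ^t_∞(U)` for every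
nonempty proper open set `U`. -/
def MetricallyDense {A : Type*} [MetricSpace A] (t : ℝ) (F : Set A) : Prop :=
  ∀ U : Set A, IsOpen U → U.Nonempty → U ≠ Set.univ →
    hContentHat t (F ∩ U) = hContentHat t U

end


open Metric Set in
/-- A point-finite cover admits an irreducible subcover. -/
lemma exists_minimal_cover {α : Type*} (G : Set (Set α)) (U : Set α)
    (hcov : U ⊆ ⋃₀ G) (hpf : ∀ x ∈ U, {Q | Q ∈ G ∧ x ∈ Q}.Finite) :
    ∃ M, M ⊆ G ∧ U ⊆ ⋃₀ M ∧ ∀ Q ∈ M, ∃ x, x ∈ Q ∧ ∀ Q' ∈ M, x ∈ Q' → Q' = Q := by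
  classical
  set F : Set (Set (Set α)) := {S | S ⊆ G ∧ U ⊆ ⋃₀ S} with hF
  have hchain : ∀ c ⊆ F, IsChain (· ⊆ ·) c → c.Nonempty →
      ∃ lb ∈ F, ∀ s ∈ c, lb ⊆ s := by
    intro c hcF hchain hcne
    refine ⟨⋂₀ c, ⟨?_, ?_⟩, fun s hs => sInter_subset_of_mem hs⟩
    · obtain ⟨S, hS⟩ := hcne
      exact (sInter_subset_of_mem hS).trans (hcF hS).1
    · intro x hx
      set T : Set (Set α) := {Q | Q ∈ G ∧ x ∈ Q} with hT
      have hTfin : T.Finite := hpf x hx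
      have key : ∀ S ∈ c, (S ∩ T).Nonempty := by
        intro S hS
        obtain ⟨Q, hQ, hxQ⟩ := (hcF hS).2 hx
        exact ⟨Q, hQ, (hcF hS).1 hQ, hxQ⟩
      have hVfin : ((fun S => S ∩ T) '' c).Finite := by
        apply hTfin.finite_subsets.subset
        rintro _ ⟨S, hS, rfl⟩
        exact inter_subset_right
      obtain ⟨S0, hS0, hmin⟩ :=
        Set.Finite.exists_minimalFor' (fun S => S ∩ T) c hVfin hcne
      obtain ⟨Q, hQS0, hQG, hxQ⟩ := key S0 hS0
      refine ⟨Q, ?_, hxQ⟩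
      rw [mem_sInter]
      intro S hS
      rcases eq_or_ne S S0 with rfl | hne
      · exact hQS0
      · rcases hchain.total hS hS0 with h | h
        · have hsub : S ∩ T ⊆ S0 ∩ T := inter_subset_inter_left _ h
          have := hmin hS hsub
          have hQ' : Q ∈ S ∩ T := this ⟨hQS0, hQG, hxQ⟩
          exact hQ'.1
        · exact h hQS0
  obtain ⟨M, -, hMmin⟩ := zorn_superset_nonempty F hchain G ⟨subset_rfl, hcov⟩
  obtain ⟨hMG, hMcov⟩ := hMmin.prop
  refine ⟨M, hMG, hMcov, ?_⟩
  intro Q hQM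
  by_contra hcon
  push_neg at hcon
  have hcov' : U ⊆ ⋃₀ (M \ {Q}) := by
    intro x hx
    obtain ⟨Q'', hQ'', hxQ''⟩ := hMcov hx
    rcases eq_or_ne Q'' Q with rfl | hne
    · obtain ⟨Q', hQ'M, hxQ', hne'⟩ := hcon x hxQ''
      exact ⟨Q', ⟨hQ'M, hne'⟩, hxQ'⟩
    · exact ⟨Q'', ⟨hQ'', hne⟩, hxQ''⟩
  have hmem : M \ {Q} ∈ F := ⟨(diff_subset).trans hMG, hcov'⟩
  have := hMmin.le_of_le hmem (diff_subset)
  exact (this hQM).2 rfl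

/-- Whitney decomposition: in a bounded metric space with a dyadic decomposition, every
nonempty proper open set admits an `A'`-Whitney decomposition, with comparison constant `B'`
depending only on `A'` and the decomposition constants. -/
theorem exists_whitney_decomposition {A : Type*} [MetricSpace A]
    (hbdd : Bornology.IsBounded (Set.univ : Set A)) (𝒟 : DyadicDecomp A) :
    ∀ A' : ℝ, 10 < A' → ∃ B' : ℝ, 1 ≤ B' ∧
      ∀ U : Set A, IsOpen U → U.Nonempty → U ≠ Set.univ →
        ∃ 𝒲 : Set (Set A), (∀ Q ∈ 𝒲, 𝒟.mem Q) ∧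
          U = ⋃₀ 𝒲 ∧
          (∀ Q ∈ 𝒲, Metric.diam Q ≤ (1 / (A' - 1)) * setDist Q Uᶜ ∧
            setDist Q Uᶜ ≤ B' * Metric.diam Q) ∧
          (∀ Q ∈ 𝒲, ∃ x ∈ Q, ∀ Q' ∈ 𝒲, x ∈ Q' → Q' = Q) := by
  classical
  intro A' hA'
  have hA'0 : (0:ℝ) < A' := by linarith
  rcases isEmpty_or_nonempty A with hemp | hA
  · refine ⟨1, le_refl 1, fun U _ hUne _ => ?_⟩
    obtain ⟨x, -⟩ := hUne
    exact absurd trivial (IsEmpty.false x).elim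
  have hC0 : (1:ℝ) ≤ 𝒟.C0 := 𝒟.one_le_C0
  have hC0pos : (0:ℝ) < 𝒟.C0 := by linarith
  obtain ⟨x0⟩ := hA
  have hcover : ∀ n (x : A), ∃ Q ∈ 𝒟.W n, x ∈ Q := by
    intro n x
    have hx : x ∈ ⋃₀ 𝒟.W n := by rw [𝒟.covers n]; trivial
    exact hx
  have hdpos : ∀ n, ∀ Q ∈ 𝒟.W n, 0 < Metric.diam Q := by
    intro n Q hQ
    obtain ⟨y, hyQ, -, hsub⟩ := 𝒟.ball_in n Q hQ
    have hy := hsub hyQ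
    rw [Metric.mem_ball, dist_self] at hy
    have hA0 : (0:ℝ) < 𝒟.A0 := lt_of_lt_of_le one_pos 𝒟.one_le_A0
    nlinarith [Metric.diam_nonneg (s := Q)]
  have hcomp2 : ∀ n, ∀ Q1 ∈ 𝒟.W n, ∀ Q2 ∈ 𝒟.W n,
      Metric.diam Q1 ≤ 𝒟.C0 ^ 2 * Metric.diam Q2 := by
    intro n Q1 h1 Q2 h2
    obtain ⟨Q', hQ', -⟩ := hcover (n + 1) x0
    have a := (𝒟.comparable n Q1 h1 Q' hQ').2
    have b := (𝒟.comparable n Q2 h2 Q' hQ').1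
    have hb : Metric.diam Q' ≤ 𝒟.C0 * Metric.diam Q2 := by
      have := mul_le_mul_of_nonneg_left b hC0pos.le
      rwa [← mul_assoc, mul_inv_cancel₀ hC0pos.ne', one_mul] at this
    calc Metric.diam Q1 ≤ 𝒟.C0 * Metric.diam Q' := a
      _ ≤ 𝒟.C0 * (𝒟.C0 * Metric.diam Q2) := by
          exact mul_le_mul_of_nonneg_left hb hC0pos.le
      _ = 𝒟.C0 ^ 2 * Metric.diam Q2 := by ring
  obtain ⟨Q0, hQ0, -⟩ := hcover 0 x0
  set δ0 := Metric.diam Q0 with hδ0def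
  have hδ0pos : 0 < δ0 := hdpos 0 Q0 hQ0
  set D := Metric.diam (Set.univ : Set A) with hDdef
  have hD0 : 0 ≤ D := Metric.diam_nonneg
  set B' := max 1 (max (A' * 𝒟.C0) (𝒟.C0 ^ 2 * D / δ0)) with hB'def
  have hB'1 : (1:ℝ) ≤ B' := le_max_left _ _
  refine ⟨B', hB'1, ?_⟩
  intro U hU hUne hUuniv
  have hUc : Uᶜ.Nonempty := Set.nonempty_compl.mpr hUuniv
  have hbQ : ∀ Q : Set A, Bornology.IsBounded Q := fun Q => hbdd.subset (Set.subset_univ Q)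
  have hfinQ : ∀ y : A, EMetric.infEdist y Uᶜ ≠ ⊤ := by
    intro y
    obtain ⟨z, hz⟩ := hUc
    exact ne_top_of_le_ne_top (edist_ne_top y z) (EMetric.infEdist_le_edist_of_mem hz)
  have hsd_le : ∀ (Q : Set A) (y : A), y ∈ Q → setDist Q Uᶜ ≤ Metric.infDist y Uᶜ := by
    intro Q y hy
    have h1 : (⨅ x ∈ Q, EMetric.infEdist x Uᶜ) ≤ EMetric.infEdist y Uᶜ := iInf₂_le y hy
    have := ENNReal.toReal_mono (hfinQ y) h1
    exact this
  have hsd_ge : ∀ (Q : Set A) (r : ℝ), 0 ≤ r → Q.Nonempty →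
      (∀ q ∈ Q, r ≤ Metric.infDist q Uᶜ) → r ≤ setDist Q Uᶜ := by
    intro Q r hr hQne h
    have h1 : ENNReal.ofReal r ≤ ⨅ x ∈ Q, EMetric.infEdist x Uᶜ := by
      refine le_iInf₂ fun q hq => ?_
      exact ENNReal.ofReal_le_of_le_toReal (h q hq)
    obtain ⟨q, hq⟩ := hQne
    have h2 : (⨅ x ∈ Q, EMetric.infEdist x Uᶜ) ≠ ⊤ :=
      ne_top_of_le_ne_top (hfinQ q) (iInf₂_le q hq)
    have := ENNReal.toReal_mono h2 h1
    rw [ENNReal.toReal_ofReal hr] at this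
    simpa [setDist] using this
  have hdUpos : ∀ x ∈ U, 0 < Metric.infDist x Uᶜ := by
    intro x hx
    exact ((hU.isClosed_compl).notMem_iff_infDist_pos hUc).mp (by simpa using hx)
  set G : Set (Set A) := {Q | (∃ n, Q ∈ 𝒟.W n) ∧ Q ⊆ U ∧
    ∃ x ∈ Q, A' * Metric.diam Q ≤ Metric.infDist x Uᶜ ∧
      Metric.infDist x Uᶜ ≤ B' * Metric.diam Q} with hGdef
  have hcov : U ⊆ ⋃₀ G := by
    intro x hx
    set d := Metric.infDist x Uᶜ with hddef
    have hdp : 0 < d := hdUpos x hx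
    have hex : ∃ n, ∃ Q ∈ 𝒟.W n, x ∈ Q ∧ A' * Metric.diam Q ≤ d := by
      obtain ⟨N, hN⟩ := 𝒟.diam_to_zero (d / A') (by positivity)
      obtain ⟨Q, hQ, hxQ⟩ := hcover N x
      refine ⟨N, Q, hQ, hxQ, ?_⟩
      have h1 := hN N le_rfl Q hQ
      rw [le_div_iff₀ hA'0] at h1
      linarith [mul_comm (Metric.diam Q) A']
    obtain ⟨Q, hQW, hxQ, hsmall⟩ := Nat.find_spec hex
    have hlow : d ≤ B' * Metric.diam Q := by
      rcases eq_or_ne (Nat.find hex) 0 with h0 | h0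
      · have hQ0' : δ0 ≤ 𝒟.C0 ^ 2 * Metric.diam Q := hcomp2 0 Q0 hQ0 Q (h0 ▸ hQW)
        obtain ⟨z, hz⟩ := hUc
        have hdD : d ≤ D := by
          refine le_trans (Metric.infDist_le_dist_of_mem hz) ?_
          exact Metric.dist_le_diam_of_mem hbdd (Set.mem_univ x) (Set.mem_univ z)
        calc d ≤ D := hdD
          _ = (D / δ0) * δ0 := by field_simp
          _ ≤ (D / δ0) * (𝒟.C0 ^ 2 * Metric.diam Q) := by
              exact mul_le_mul_of_nonneg_left hQ0' (div_nonneg hD0 hδ0pos.le)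
          _ = (𝒟.C0 ^ 2 * D / δ0) * Metric.diam Q := by
              field_simp
          _ ≤ B' * Metric.diam Q := by
              refine mul_le_mul_of_nonneg_right ?_ Metric.diam_nonneg
              exact le_trans (le_max_right _ _) (le_max_right _ _)
      · obtain ⟨m, hm⟩ := Nat.exists_eq_succ_of_ne_zero h0
        have hfail := Nat.find_min hex (m := m) (by omega)
        obtain ⟨Q', hQ'W, hxQ'⟩ := hcover m x
        have hgt : d < A' * Metric.diam Q' := by
          by_contra hc
          push_neg at hc
          exact hfail ⟨Q', hQ'W, hxQ', hc⟩
        have hQm1 : Q ∈ 𝒟.W (m + 1) := by rw [hm] at hQW; exact hQW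
        have hcmp := (𝒟.comparable m Q' hQ'W Q hQm1).2
        have hAC : A' * 𝒟.C0 ≤ B' := le_trans (le_max_left _ _) (le_max_right _ _)
        refine le_of_lt ?_
        calc d < A' * Metric.diam Q' := hgt
          _ ≤ A' * (𝒟.C0 * Metric.diam Q) := by
              exact mul_le_mul_of_nonneg_left hcmp hA'0.le
          _ = (A' * 𝒟.C0) * Metric.diam Q := by ring
          _ ≤ B' * Metric.diam Q := by
              exact mul_le_mul_of_nonneg_right hAC Metric.diam_nonneg
    have hQU : Q ⊆ U := by
      intro q hq
      by_contra hqU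
      have h1 : d ≤ dist x q := Metric.infDist_le_dist_of_mem hqU
      have h2 : dist x q ≤ Metric.diam Q := Metric.dist_le_diam_of_mem (hbQ Q) hxQ hq
      have h3 : 0 < Metric.diam Q := hdpos _ Q hQW
      nlinarith
    exact ⟨Q, ⟨⟨_, hQW⟩, hQU, x, hxQ, hsmall, hlow⟩, hxQ⟩
  have hpf : ∀ x ∈ U, {Q | Q ∈ G ∧ x ∈ Q}.Finite := by
    intro x hx
    set d := Metric.infDist x Uᶜ with hddef
    have hdp : 0 < d := hdUpos x hx
    obtain ⟨N, hN⟩ := 𝒟.diam_to_zero (d / (2 * (B' + 1))) (by positivity)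
    have hfin : {Q : Set A | ∃ n < N, Q ∈ 𝒟.W n}.Finite := by
      have heq : {Q : Set A | ∃ n < N, Q ∈ 𝒟.W n} = ⋃ n ∈ Set.Iio N, 𝒟.W n := by
        ext Q; simp [Set.mem_Iio]
      rw [heq]
      exact (Set.finite_Iio N).biUnion fun n _ => 𝒟.finite n
    refine hfin.subset ?_
    rintro Q ⟨⟨⟨n, hQn⟩, hQU, y, hyQ, -, hyd⟩, hxQ⟩
    refine ⟨n, ?_, hQn⟩
    by_contra hn
    push_neg at hn
    have hsmallQ : Metric.diam Q ≤ d / (2 * (B' + 1)) := hN n hn Q hQn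
    have h1 : d ≤ Metric.infDist y Uᶜ + dist x y := Metric.infDist_le_infDist_add_dist
    have h2 : dist x y ≤ Metric.diam Q := Metric.dist_le_diam_of_mem (hbQ Q) hxQ hyQ
    have h3 : Metric.diam Q * (2 * (B' + 1)) ≤ d :=
      (le_div_iff₀ (by linarith)).mp hsmallQ
    nlinarith
  obtain ⟨M, hMG, hMcov, hMpriv⟩ := exists_minimal_cover G U hcov hpf
  refine ⟨M, fun Q hQ => (hMG hQ).1, ?_, ?_, ?_⟩
  · refine Set.Subset.antisymm hMcov ?_
    rintro x ⟨Q, hQ, hxQ⟩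
    exact (hMG hQ).2.1 hxQ
  · intro Q hQM
    obtain ⟨-, hQU, y, hyQ, h1, h2⟩ := hMG hQM
    have hQne : Q.Nonempty := ⟨y, hyQ⟩
    have hdQ0 : 0 ≤ Metric.diam Q := Metric.diam_nonneg
    constructor
    · have key : (A' - 1) * Metric.diam Q ≤ setDist Q Uᶜ := by
        refine hsd_ge Q _ (by nlinarith) hQne ?_
        intro q hq
        have ha : Metric.infDist y Uᶜ ≤ Metric.infDist q Uᶜ + dist y q :=
          Metric.infDist_le_infDist_add_dist
        have hb : dist y q ≤ Metric.diam Q := Metric.dist_le_diam_of_mem (hbQ Q) hyQ hq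
        linarith
      have hA1 : (0:ℝ) < A' - 1 := by linarith
      rw [one_div, inv_mul_eq_div, le_div_iff₀ hA1]
      nlinarith [key]
    · calc setDist Q Uᶜ ≤ Metric.infDist y Uᶜ := hsd_le Q y hyQ
        _ ≤ B' * Metric.diam Q := h2
  · intro Q hQ
    obtain ⟨x, hxQ, hx⟩ := hMpriv Q hQ
    exact ⟨x, hxQ, hx⟩
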